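/- arXiv:1507.07054 — 3 statements merged into one kernel-verified Lean document; each statement's English description precedes it below -/
import Mathlib

section
/- Let θ = (θ_1,…,θ_q) be a stability parameter with θ_1 < 0 and θ_i ≥ 0 for all i > 1, and let A be a θ-stable finite graded algebra of dimension vector (d_1,…,d_q). Then A is generated in degree 1, i.e., A_{≥1}^k = A_{≥k} for all k ≥ 1. -/
/-! θ-stable finite graded algebras with θ₁ < 0 and θᵢ ≥ 0 for i > 1 are generated in degree 1. -/

open Module

variable {A : Type*}

/-- `A_{≥n}`: the sum of the graded pieces of degree at least `n`. -/
def Ageq [Ring A] [Algebra ℂ A] (𝒜 : ℕ → Submodule ℂ A) (n : ℕ) : Submodule ℂ A :=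
  ⨆ i ∈ Set.Ici n, 𝒜 i

/-- An admissible family of two-sided ideals `A ⊇ I^(1) ⊇ I^(2) ⊇ …` with
`I^(k)·I^(ℓ) ⊆ I^(k+ℓ)`, vanishing eventually in each degree. -/
structure AdmissibleFamily [Ring A] [Algebra ℂ A] (𝒜 : ℕ → Submodule ℂ A)
    (I : ℕ → Submodule ℂ A) : Prop where
  ideal_left : ∀ k, 1 ≤ k → ∀ a : A, ∀ x ∈ I k, a * x ∈ I k
  ideal_right : ∀ k, 1 ≤ k → ∀ a : A, ∀ x ∈ I k, x * a ∈ I k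
  descending : ∀ k, 1 ≤ k → I (k + 1) ≤ I k
  mul_mem : ∀ k l, 1 ≤ k → 1 ≤ l → ∀ x ∈ I k, ∀ y ∈ I l, x * y ∈ I (k + l)
  eventually_zero : ∀ i, ∃ l, ∀ k, l ≤ k → I k ⊓ 𝒜 i = ⊥

/-- The family `I` dominates the tautological family `(A_{≥k})_k`. -/
def Dominates [Ring A] [Algebra ℂ A] (𝒜 I : ℕ → Submodule ℂ A) : Prop :=
  ∀ k, 1 ≤ k → Ageq 𝒜 k ≤ I k

/-- The weight `w_i = Σ_{k≥1} dim I^(k)_i` of an admissible family of ideals,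
computed with a cutoff `L` beyond which all `I^(k)_i` vanish. -/
noncomputable def weight [Ring A] [Algebra ℂ A] (𝒜 I : ℕ → Submodule ℂ A)
    (L i : ℕ) : ℕ :=
  ∑ k ∈ Finset.Icc 1 L, finrank ℂ ↥(I k ⊓ 𝒜 i)

/-- `A` is θ-stable: `Σ θ_i w_i > 0` for every non-trivial standard admissible
family of ideals (one not dominating the tautological family). -/
def ThetaStable [Ring A] [Algebra ℂ A] (𝒜 : ℕ → Submodule ℂ A) (q : ℕ)
    (θ : ℕ → ℤ) : Prop :=
  ∀ I : ℕ → Submodule ℂ A, AdmissibleFamily 𝒜 I → I 1 ≠ ⊥ → ¬ Dominates 𝒜 I →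
    ∀ L : ℕ, (∀ k, L ≤ k → ∀ i, I k ⊓ 𝒜 i = ⊥) →
      0 < ∑ i ∈ Finset.Icc 1 q, θ i * (weight 𝒜 I L i : ℤ)

/-- `A` is θ-semi-stable: `Σ θ_i w_i ≥ 0` for every non-trivial standard
admissible family of ideals. -/
def ThetaSemiStable [Ring A] [Algebra ℂ A] (𝒜 : ℕ → Submodule ℂ A) (q : ℕ)
    (θ : ℕ → ℤ) : Prop :=
  ∀ I : ℕ → Submodule ℂ A, AdmissibleFamily 𝒜 I → I 1 ≠ ⊥ → ¬ Dominates 𝒜 I →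
    ∀ L : ℕ, (∀ k, L ≤ k → ∀ i, I k ⊓ 𝒜 i = ⊥) →
      0 ≤ ∑ i ∈ Finset.Icc 1 q, θ i * (weight 𝒜 I L i : ℤ)

/-- if `θ` is a stability parameter with `θ₁ < 0` and `θ_i ≥ 0` for
`i > 1`, then every θ-stable finite graded algebra `A` of dimension vector
`(d₁,…,d_q)` is generated in degree 1: `(A_{≥1})^k = A_{≥k}` for all `k ≥ 1`. -/
theorem theta_stable_generated_in_degree_one [Ring A] [Algebra ℂ A]
    (𝒜 : ℕ → Submodule ℂ A) [GradedAlgebra 𝒜] [∀ i, FiniteDimensional ℂ ↥(𝒜 i)]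
    (q : ℕ) (hq : 1 ≤ q) (hbound : ∀ i, q < i → 𝒜 i = ⊥)
    (hconn : 𝒜 0 = Submodule.span ℂ {1})
    (hdpos : ∀ i, 1 ≤ i → i ≤ q → 0 < finrank ℂ ↥(𝒜 i))
    (θ : ℕ → ℤ)
    (hparam1 : ∑ i ∈ Finset.Icc 1 q, θ i * (finrank ℂ ↥(𝒜 i) : ℤ) < 0)
    (hparam2 : ∑ i ∈ Finset.Icc 1 q, (i : ℤ) * θ i * (finrank ℂ ↥(𝒜 i) : ℤ) = 0)
    (hθ1 : θ 1 < 0) (hθ : ∀ i, 1 < i → 0 ≤ θ i)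
    (hstable : ThetaStable 𝒜 q θ) :
    ∀ k, 1 ≤ k → (Ageq 𝒜 1) ^ k = Ageq 𝒜 k := by
  intro k hk
  by_contra hne
  set p := Ageq 𝒜 1 with hp
  -- basic facts about Ageq
  have hgrade_le : ∀ {m i : ℕ}, m ≤ i → 𝒜 i ≤ Ageq 𝒜 m := by
    intro m i h
    exact le_iSup₂ (f := fun i (_ : i ∈ Set.Ici m) => 𝒜 i) i h
  have hanti : ∀ {m n : ℕ}, m ≤ n → Ageq 𝒜 n ≤ Ageq 𝒜 m := by
    intro m n h
    exact iSup₂_le fun i hi => hgrade_le (le_trans h hi)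
  have hmul : ∀ m n : ℕ, Ageq 𝒜 m * Ageq 𝒜 n ≤ Ageq 𝒜 (m + n) := by
    intro m n
    rw [Ageq, Ageq, iSup_subtype', iSup_subtype', Submodule.iSup_mul]
    refine iSup_le fun i => ?_
    rw [Submodule.mul_iSup]
    refine iSup_le fun j => ?_
    refine le_trans ?_ (hgrade_le (add_le_add i.2 j.2))
    exact Submodule.mul_le.2 fun x hx y hy => SetLike.mul_mem_graded hx hy
  have hIle : ∀ m, 1 ≤ m → p ^ m ≤ Ageq 𝒜 m := by
    intro m hm
    induction m with
    | zero => omega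
    | succ n ih =>
      rcases Nat.eq_zero_or_pos n with h | h
      · subst h; rw [pow_one]
      · calc p ^ (n + 1) = p ^ n * p := pow_succ p n
          _ ≤ Ageq 𝒜 n * Ageq 𝒜 1 := mul_le_mul' (ih h) le_rfl
          _ ≤ Ageq 𝒜 (n + 1) := hmul n 1
  have hinf_bot : ∀ {m i : ℕ}, i < m → Ageq 𝒜 m ⊓ 𝒜 i = ⊥ := by
    intro m i him
    have hind := DirectSum.IsInternal.submodule_iSupIndep (DirectSum.Decomposition.isInternal 𝒜) i
    have hle : Ageq 𝒜 m ≤ ⨆ j, ⨆ _ : j ≠ i, 𝒜 j := by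
      refine iSup₂_le fun j hj => ?_
      have hj' : m ≤ j := hj
      exact le_iSup₂ (f := fun j (_ : j ≠ i) => 𝒜 j) j (by omega)
    exact disjoint_iff.1 (hind.symm.mono_left hle)
  have key : ∀ m i : ℕ, 1 ≤ m → i < m → p ^ m ⊓ 𝒜 i = ⊥ := by
    intro m i hm him
    exact le_bot_iff.1
      (le_trans (inf_le_inf_right _ (hIle m hm)) (hinf_bot him).le)
  have htop : ∀ a : A, a ∈ 𝒜 0 ⊔ p := by
    intro a
    have h : (⊤ : Submodule ℂ A) ≤ 𝒜 0 ⊔ p := by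
      rw [← DirectSum.IsInternal.submodule_iSup_eq_top (DirectSum.Decomposition.isInternal 𝒜)]
      refine iSup_le fun i => ?_
      rcases Nat.eq_zero_or_pos i with h | h
      · exact h ▸ le_sup_left
      · exact le_trans (hgrade_le h) le_sup_right
    exact h Submodule.mem_top
  have hpp : p * p ≤ p := le_trans (hmul 1 1) (hanti one_le_two)
  have hdesc : ∀ m, 1 ≤ m → p ^ (m + 1) ≤ p ^ m := by
    intro m hm
    induction m with
    | zero => omega
    | succ n ih =>
      rcases Nat.eq_zero_or_pos n with h | h
      · subst h; simpa [pow_succ, pow_one] using hpp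
      · calc p ^ (n + 1 + 1) = p ^ (n + 1) * p := pow_succ p (n + 1)
          _ ≤ p ^ n * p := mul_le_mul' (ih h) le_rfl
          _ = p ^ (n + 1) := (pow_succ p n).symm
  -- the admissible family of powers
  have hAdm : AdmissibleFamily 𝒜 (fun m => p ^ m) := by
    constructor
    · intro m hm a x hx
      rcases Submodule.mem_sup.1 (htop a) with ⟨b, hb, c, hc, rfl⟩
      rw [add_mul]
      refine Submodule.add_mem _ ?_ ?_
      · rw [hconn] at hb
        rcases Submodule.mem_span_singleton.1 hb with ⟨r, rfl⟩
        rw [smul_mul_assoc, one_mul]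
        exact Submodule.smul_mem _ r hx
      · refine hdesc m hm ?_
        rw [pow_succ']
        exact Submodule.mul_mem_mul hc hx
    · intro m hm a x hx
      rcases Submodule.mem_sup.1 (htop a) with ⟨b, hb, c, hc, rfl⟩
      rw [mul_add]
      refine Submodule.add_mem _ ?_ ?_
      · rw [hconn] at hb
        rcases Submodule.mem_span_singleton.1 hb with ⟨r, rfl⟩
        rw [mul_smul_comm, mul_one]
        exact Submodule.smul_mem _ r hx
      · refine hdesc m hm ?_
        rw [pow_succ]
        exact Submodule.mul_mem_mul hx hc
    · exact fun m hm => hdesc m hm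
    · intro k' l hk' hl x hx y hy
      rw [pow_add]
      exact Submodule.mul_mem_mul hx hy
    · intro i
      exact ⟨i + 1, fun m hm => key m i (by omega) (by omega)⟩
  -- nontrivial
  have hA1 : 𝒜 1 ≠ ⊥ := by
    intro h
    have := hdpos 1 le_rfl hq
    rw [h, finrank_bot] at this
    exact lt_irrefl 0 this
  have hI1 : (fun m => p ^ m) 1 ≠ ⊥ := by
    simp only [pow_one]
    intro h
    exact hA1 (le_bot_iff.1 (h ▸ hgrade_le le_rfl))
  -- not dominating
  have hND : ¬ Dominates 𝒜 (fun m => p ^ m) := by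
    intro hdom
    exact hne (le_antisymm (hIle k hk) (hdom k hk))
  -- cutoff
  have hcut : ∀ m, q + 1 ≤ m → ∀ i, (fun m => p ^ m) m ⊓ 𝒜 i = ⊥ := by
    intro m hm i
    by_cases hi : i ≤ q
    · exact key m i (by omega) (by omega)
    · simp only [hbound i (by omega), inf_bot_eq]
  have H := hstable (fun m => p ^ m) hAdm hI1 hND (q + 1) hcut
  -- weight computations
  have hw1 : weight 𝒜 (fun m => p ^ m) (q + 1) 1 = finrank ℂ ↥(𝒜 1) := by
    rw [weight, Finset.sum_eq_single 1]
    · rw [show p ^ 1 ⊓ 𝒜 1 = 𝒜 1 from by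
        rw [pow_one]; exact inf_eq_right.mpr (hgrade_le le_rfl)]
    · intro m hm hm1
      rw [Finset.mem_Icc] at hm
      rw [key m 1 (by omega) (by omega), finrank_bot]
    · intro h
      exact absurd (Finset.mem_Icc.mpr ⟨le_rfl, by omega⟩) h
  have hwle : ∀ i, 1 ≤ i → i ≤ q →
      weight 𝒜 (fun m => p ^ m) (q + 1) i ≤ i * finrank ℂ ↥(𝒜 i) := by
    intro i h1 h2
    rw [weight]
    calc ∑ m ∈ Finset.Icc 1 (q + 1), finrank ℂ ↥((fun m => p ^ m) m ⊓ 𝒜 i)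
        = ∑ m ∈ Finset.Icc 1 i, finrank ℂ ↥((fun m => p ^ m) m ⊓ 𝒜 i) := by
          refine (Finset.sum_subset (Finset.Icc_subset_Icc_right (by omega)) ?_).symm
          intro m hm hnm
          rw [Finset.mem_Icc] at hm
          have : ¬ m ≤ i := fun h => hnm (Finset.mem_Icc.mpr ⟨hm.1, h⟩)
          rw [key m i (by omega) (by omega), finrank_bot]
      _ ≤ ∑ m ∈ Finset.Icc 1 i, finrank ℂ ↥(𝒜 i) :=
          Finset.sum_le_sum fun m _ => Submodule.finrank_mono inf_le_right
      _ = i * finrank ℂ ↥(𝒜 i) := by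
          rw [Finset.sum_const, Nat.card_Icc, smul_eq_mul, Nat.add_sub_cancel]
  have hfin : ∑ i ∈ Finset.Icc 1 q, θ i * (weight 𝒜 (fun m => p ^ m) (q + 1) i : ℤ)
      ≤ ∑ i ∈ Finset.Icc 1 q, (i : ℤ) * θ i * (finrank ℂ ↥(𝒜 i) : ℤ) := by
    refine Finset.sum_le_sum fun i hi => ?_
    rw [Finset.mem_Icc] at hi
    rcases eq_or_lt_of_le hi.1 with h | h
    · rw [← h, hw1]
      have h2 : ((1 : ℕ) : ℤ) * θ 1 * (finrank ℂ ↥(𝒜 1) : ℤ)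
          = θ 1 * (finrank ℂ ↥(𝒜 1) : ℤ) := by push_cast; ring
      rw [h2]
    · have hθi := hθ i h
      have hle := hwle i hi.1 hi.2
      calc θ i * (weight 𝒜 (fun m => p ^ m) (q + 1) i : ℤ)
          ≤ θ i * ((i * finrank ℂ ↥(𝒜 i) : ℕ) : ℤ) :=
            mul_le_mul_of_nonneg_left (by exact_mod_cast hle) hθi
        _ = (i : ℤ) * θ i * (finrank ℂ ↥(𝒜 i) : ℤ) := by push_cast; ring
  linarith [hparam2, H, hfin]
end

section
/- If the stability parameter θ satisfies θ_1 < 0 and θ_i > 0 for all i > 1, then every θ-semi-stable finite graded algebra A (graded in [0,q]) is generated in degree 1. -/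
/-! θ-semi-stable finite graded algebras with θ₁ < 0 and θᵢ > 0 for i > 1 are generated in degree 1. -/

open Module

variable {A : Type*}

section helpers
variable [Ring A] [Algebra ℂ A] (𝒜 : ℕ → Submodule ℂ A)

lemma le_Ageq {n i : ℕ} (h : n ≤ i) : 𝒜 i ≤ Ageq 𝒜 n :=
  le_biSup _ h

lemma Ageq_mono {m n : ℕ} (h : m ≤ n) : Ageq 𝒜 n ≤ Ageq 𝒜 m :=
  iSup₂_le fun i hi => le_Ageq 𝒜 (h.trans hi)

lemma mem_Ageq_induction {n : ℕ} {C : A → Prop} {x : A} (hx : x ∈ Ageq 𝒜 n)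
    (hmem : ∀ i, n ≤ i → ∀ y ∈ 𝒜 i, C y) (h0 : C 0)
    (hadd : ∀ y z, C y → C z → C (y + z)) : C x := by
  rw [Ageq, iSup_subtype'] at hx
  exact Submodule.iSup_induction (motive := C) _ hx (fun i y hy => hmem i i.2 y hy) h0 hadd

lemma Ageq_mul [GradedAlgebra 𝒜] (n m : ℕ) :
    Ageq 𝒜 n * Ageq 𝒜 m ≤ Ageq 𝒜 (n + m) := by
  rw [Submodule.mul_le]
  intro x hx y hy
  refine mem_Ageq_induction (C := fun x => x * y ∈ Ageq 𝒜 (n + m)) 𝒜 hx ?_ (by simp) ?_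
  · intro i hi z hz
    refine mem_Ageq_induction (C := fun w => z * w ∈ Ageq 𝒜 (n + m)) 𝒜 hy ?_ (by simp) ?_
    · intro j hj w hw
      exact le_Ageq 𝒜 (add_le_add hi hj) (SetLike.mul_mem_graded hz hw)
    · intro u v hu hv; simpa [mul_add] using add_mem hu hv
  · intro u v hu hv; simpa [add_mul] using add_mem hu hv

lemma Ageq_inf_bot [GradedAlgebra 𝒜] {n i : ℕ} (h : i < n) :
    Ageq 𝒜 n ⊓ 𝒜 i = ⊥ := by
  have hind := (DirectSum.Decomposition.isInternal 𝒜).submodule_iSupIndep i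
  have hle : Ageq 𝒜 n ≤ ⨆ j, ⨆ (_ : j ≠ i), 𝒜 j := by
    refine iSup₂_le fun j hj => ?_
    have hj' : n ≤ j := hj
    exact le_iSup₂ (f := fun j (_ : j ≠ i) => 𝒜 j) j (by omega)
  rw [inf_comm]
  exact (hind.mono_right hle).eq_bot

lemma top_eq_sup [GradedAlgebra 𝒜] (hconn : 𝒜 0 = Submodule.span ℂ {1}) :
    (⊤ : Submodule ℂ A) = 𝒜 0 ⊔ Ageq 𝒜 1 := by
  refine le_antisymm ?_ le_top
  rw [← (DirectSum.Decomposition.isInternal 𝒜).submodule_iSup_eq_top]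
  refine iSup_le fun i => ?_
  rcases Nat.eq_zero_or_pos i with h | h
  · subst h; exact le_sup_left
  · exact le_sup_of_le_right (le_Ageq 𝒜 h)

end helpers

section main
variable [Ring A] [Algebra ℂ A] (𝒜 : ℕ → Submodule ℂ A) [GradedAlgebra 𝒜]
  (hconn : 𝒜 0 = Submodule.span ℂ {1})

lemma pow_le_Ageq : ∀ k, 1 ≤ k → (Ageq 𝒜 1) ^ k ≤ Ageq 𝒜 k := by
  intro k hk
  induction k with
  | zero => omega
  | succ n ih =>
    rcases Nat.eq_zero_or_pos n with h | h
    · subst h; rw [pow_one]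
    · calc (Ageq 𝒜 1) ^ (n + 1) = (Ageq 𝒜 1) ^ n * Ageq 𝒜 1 := pow_succ _ _
        _ ≤ Ageq 𝒜 n * Ageq 𝒜 1 := mul_le_mul' (ih h) le_rfl
        _ ≤ Ageq 𝒜 (n + 1) := Ageq_mul 𝒜 n 1

lemma pow_descending : ∀ k, 1 ≤ k → (Ageq 𝒜 1) ^ (k + 1) ≤ (Ageq 𝒜 1) ^ k := by
  intro k hk
  induction k with
  | zero => omega
  | succ n ih =>
    rcases Nat.eq_zero_or_pos n with h | h
    · subst h
      rw [pow_one]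
      calc (Ageq 𝒜 1) ^ 2 ≤ Ageq 𝒜 2 := pow_le_Ageq 𝒜 2 one_le_two
        _ ≤ Ageq 𝒜 1 := Ageq_mono 𝒜 one_le_two
    · calc (Ageq 𝒜 1) ^ (n + 2) = (Ageq 𝒜 1) ^ (n + 1) * Ageq 𝒜 1 := pow_succ _ _
        _ ≤ (Ageq 𝒜 1) ^ n * Ageq 𝒜 1 := mul_le_mul' (ih h) le_rfl
        _ = (Ageq 𝒜 1) ^ (n + 1) := (pow_succ _ _).symm

include hconn in
lemma top_mul_pow (k : ℕ) (hk : 1 ≤ k) :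
    (⊤ : Submodule ℂ A) * (Ageq 𝒜 1) ^ k ≤ (Ageq 𝒜 1) ^ k := by
  rw [top_eq_sup 𝒜 hconn, Submodule.sup_mul]
  refine sup_le ?_ ?_
  · rw [hconn, ← Submodule.one_eq_span, Submodule.one_mul]
  · calc Ageq 𝒜 1 * (Ageq 𝒜 1) ^ k = (Ageq 𝒜 1) ^ (k + 1) := (pow_succ' _ _).symm
      _ ≤ (Ageq 𝒜 1) ^ k := pow_descending 𝒜 k hk

include hconn in
lemma pow_mul_top (k : ℕ) (hk : 1 ≤ k) :
    (Ageq 𝒜 1) ^ k * (⊤ : Submodule ℂ A) ≤ (Ageq 𝒜 1) ^ k := by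
  rw [top_eq_sup 𝒜 hconn, Submodule.mul_sup]
  refine sup_le ?_ ?_
  · rw [hconn, ← Submodule.one_eq_span, Submodule.mul_one]
  · calc (Ageq 𝒜 1) ^ k * Ageq 𝒜 1 = (Ageq 𝒜 1) ^ (k + 1) := (pow_succ _ _).symm
      _ ≤ (Ageq 𝒜 1) ^ k := pow_descending 𝒜 k hk

end main

/-- if the stability parameter `θ` satisfies `θ₁ < 0` and `θ_i > 0`
for all `i > 1`, then every θ-semi-stable finite graded algebra `A` (graded in
`[0,q]`) is generated in degree 1. -/
theorem theta_semistable_generated_in_degree_one [Ring A] [Algebra ℂ A]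
    (𝒜 : ℕ → Submodule ℂ A) [GradedAlgebra 𝒜] [∀ i, FiniteDimensional ℂ ↥(𝒜 i)]
    (q : ℕ) (hq : 1 ≤ q) (hbound : ∀ i, q < i → 𝒜 i = ⊥)
    (hconn : 𝒜 0 = Submodule.span ℂ {1})
    (hdpos : ∀ i, 1 ≤ i → i ≤ q → 0 < finrank ℂ ↥(𝒜 i))
    (θ : ℕ → ℤ)
    (hparam1 : ∑ i ∈ Finset.Icc 1 q, θ i * (finrank ℂ ↥(𝒜 i) : ℤ) < 0)
    (hparam2 : ∑ i ∈ Finset.Icc 1 q, (i : ℤ) * θ i * (finrank ℂ ↥(𝒜 i) : ℤ) = 0)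
    (hθ1 : θ 1 < 0) (hθ : ∀ i, 1 < i → i ≤ q → 0 < θ i)
    (hsemistable : ThetaSemiStable 𝒜 q θ) :
    ∀ k, 1 ≤ k → (Ageq 𝒜 1) ^ k = Ageq 𝒜 k := by
  by_contra hcon
  push_neg at hcon
  obtain ⟨k₀, hk₀1, hk₀⟩ := hcon
  set P : Submodule ℂ A := Ageq 𝒜 1 with hP
  set I : ℕ → Submodule ℂ A := fun k => P ^ k with hI
  -- basic facts
  have hAgeq_bot : ∀ k, q < k → Ageq 𝒜 k = ⊥ := by
    intro k hk
    refine le_bot_iff.mp (iSup₂_le fun i hi => ?_)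
    have : q < i := lt_of_lt_of_le hk hi
    rw [hbound i this]
  have hpow_bot : ∀ k, q < k → I k = ⊥ := by
    intro k hk
    have h1 : 1 ≤ k := le_trans hq hk.le
    exact le_bot_iff.mp ((pow_le_Ageq 𝒜 k h1).trans (hAgeq_bot k hk).le)
  -- admissible family
  have hadm : AdmissibleFamily 𝒜 I := by
    constructor
    · intro k hk a x hx
      exact top_mul_pow 𝒜 hconn k hk (Submodule.mul_mem_mul Submodule.mem_top hx)
    · intro k hk a x hx
      exact pow_mul_top 𝒜 hconn k hk (Submodule.mul_mem_mul hx Submodule.mem_top)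
    · exact pow_descending 𝒜
    · intro k l hk hl x hx y hy
      have := Submodule.mul_mem_mul hx hy
      rwa [← pow_add] at this
    · intro i
      refine ⟨q + 1, fun k hk => ?_⟩
      rw [hpow_bot k (by omega), bot_inf_eq]
  -- nontrivial
  have hA1ne : 𝒜 1 ≠ ⊥ := by
    intro h
    have := hdpos 1 le_rfl hq
    rw [h] at this
    simp at this
  have hI1ne : I 1 ≠ ⊥ := by
    intro h
    apply hA1ne
    refine le_bot_iff.mp ?_
    calc 𝒜 1 ≤ P := le_Ageq 𝒜 le_rfl
      _ = I 1 := (pow_one P).symm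
      _ = ⊥ := h
  -- not dominating
  have hndom : ¬ Dominates 𝒜 I := by
    intro hdom
    exact hk₀ (le_antisymm (pow_le_Ageq 𝒜 k₀ hk₀1) (hdom k₀ hk₀1))
  -- vanishing beyond L
  set L := q + 1 with hL
  have hvan : ∀ k, L ≤ k → ∀ i, I k ⊓ 𝒜 i = ⊥ := by
    intro k hk i
    rw [hpow_bot k (by omega), bot_inf_eq]
  have hss := hsemistable I hadm hI1ne hndom L hvan
  -- k₀ ≥ 2
  have hk₀2 : 2 ≤ k₀ := by
    rcases Nat.lt_or_ge k₀ 2 with h | h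
    · interval_cases k₀
      · exact absurd (pow_one P) hk₀
    · exact h
  -- find i₀
  have hnle : ¬ Ageq 𝒜 k₀ ≤ I k₀ := fun h =>
    hk₀ (le_antisymm (pow_le_Ageq 𝒜 k₀ hk₀1) h)
  have hi₀ : ∃ i₀, k₀ ≤ i₀ ∧ ¬ 𝒜 i₀ ≤ I k₀ := by
    by_contra h
    push_neg at h
    exact hnle (iSup₂_le fun i hi => h i hi)
  obtain ⟨i₀, hi₀k, hi₀⟩ := hi₀
  have hi₀q : i₀ ≤ q := by
    by_contra h
    push_neg at h
    exact hi₀ (by rw [hbound i₀ h]; exact bot_le)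
  -- strict inequality at (k₀, i₀)
  have hstrict : finrank ℂ ↥(I k₀ ⊓ 𝒜 i₀) < finrank ℂ ↥(𝒜 i₀) := by
    refine Submodule.finrank_lt_finrank_of_lt (lt_of_le_of_ne inf_le_right ?_)
    intro h
    exact hi₀ (inf_eq_right.mp h)
  -- weight bounds
  have hterm_le : ∀ i k, finrank ℂ ↥(I k ⊓ 𝒜 i) ≤ finrank ℂ ↥(𝒜 i) := fun i k =>
    Submodule.finrank_mono inf_le_right
  have hterm_zero : ∀ i k, i < k → I k ⊓ 𝒜 i = ⊥ := by
    intro i k h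
    refine le_bot_iff.mp ?_
    rcases Nat.lt_or_ge q k with hc | hc
    · rw [hpow_bot k hc, bot_inf_eq]
    · calc I k ⊓ 𝒜 i ≤ Ageq 𝒜 k ⊓ 𝒜 i :=
            inf_le_inf_right _ (pow_le_Ageq 𝒜 k (by omega))
        _ = ⊥ := Ageq_inf_bot 𝒜 h
  -- weight rewriting
  have hwrep : ∀ i, 1 ≤ i → i ≤ q →
      weight 𝒜 I L i = ∑ k ∈ Finset.Icc 1 i, finrank ℂ ↥(I k ⊓ 𝒜 i) := by
    intro i h1 h2
    rw [weight]
    refine (Finset.sum_subset (Finset.Icc_subset_Icc le_rfl (by omega)) ?_).symm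
    intro k hk hk'
    have hik : i < k := by
      simp only [Finset.mem_Icc] at hk hk'
      omega
    rw [hterm_zero i k hik]
    simp
  -- weight at 1
  have hw1 : weight 𝒜 I L 1 = finrank ℂ ↥(𝒜 1) := by
    rw [hwrep 1 le_rfl hq]
    have : I 1 ⊓ 𝒜 1 = 𝒜 1 := by
      refine inf_eq_right.mpr ?_
      rw [hI]
      simp only [pow_one]
      exact le_Ageq 𝒜 le_rfl
    rw [Finset.Icc_self, Finset.sum_singleton, this]
  -- weight upper bound
  have hwle : ∀ i, 1 ≤ i → i ≤ q → weight 𝒜 I L i ≤ i * finrank ℂ ↥(𝒜 i) := by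
    intro i h1 h2
    rw [hwrep i h1 h2]
    calc ∑ k ∈ Finset.Icc 1 i, finrank ℂ ↥(I k ⊓ 𝒜 i)
        ≤ ∑ _k ∈ Finset.Icc 1 i, finrank ℂ ↥(𝒜 i) :=
          Finset.sum_le_sum fun k _ => hterm_le i k
      _ = i * finrank ℂ ↥(𝒜 i) := by
          rw [Finset.sum_const, Nat.card_Icc, smul_eq_mul, Nat.add_sub_cancel]
  -- strict weight bound at i₀
  have hi₀1 : 1 ≤ i₀ := by omega
  have hwlt : weight 𝒜 I L i₀ < i₀ * finrank ℂ ↥(𝒜 i₀) := by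
    rw [hwrep i₀ hi₀1 hi₀q]
    calc ∑ k ∈ Finset.Icc 1 i₀, finrank ℂ ↥(I k ⊓ 𝒜 i₀)
        < ∑ _k ∈ Finset.Icc 1 i₀, finrank ℂ ↥(𝒜 i₀) := by
          refine Finset.sum_lt_sum (fun k _ => hterm_le i₀ k) ⟨k₀, ?_, hstrict⟩
          simp only [Finset.mem_Icc]
          omega
      _ = i₀ * finrank ℂ ↥(𝒜 i₀) := by
          rw [Finset.sum_const, Nat.card_Icc, smul_eq_mul, Nat.add_sub_cancel]
  -- final contradiction
  have hsum_lt : ∑ i ∈ Finset.Icc 1 q, θ i * (weight 𝒜 I L i : ℤ) <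
      ∑ i ∈ Finset.Icc 1 q, θ i * ((i : ℤ) * (finrank ℂ ↥(𝒜 i) : ℤ)) := by
    refine Finset.sum_lt_sum ?_ ⟨i₀, ?_, ?_⟩
    · intro i hi
      simp only [Finset.mem_Icc] at hi
      rcases eq_or_lt_of_le hi.1 with h | h
    
      · subst h
        rw [hw1]
        norm_num
      · have hθi : 0 < θ i := hθ i h hi.2
        have hw : (weight 𝒜 I L i : ℤ) ≤ (i : ℤ) * (finrank ℂ ↥(𝒜 i) : ℤ) := by
          exact_mod_cast hwle i hi.1 hi.2
        exact mul_le_mul_of_nonneg_left hw hθi.le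
    · simp only [Finset.mem_Icc]
      omega
    · have hθi : 0 < θ i₀ := hθ i₀ (by omega) hi₀q
      have hw : (weight 𝒜 I L i₀ : ℤ) < (i₀ : ℤ) * (finrank ℂ ↥(𝒜 i₀) : ℤ) := by
        exact_mod_cast hwlt
      exact mul_lt_mul_of_pos_left hw hθi
  have hzero : ∑ i ∈ Finset.Icc 1 q, θ i * ((i : ℤ) * (finrank ℂ ↥(𝒜 i) : ℤ)) = 0 := by
    rw [← hparam2]
    exact Finset.sum_congr rfl fun i _ => by ring
  rw [hzero] at hsum_lt
  exact absurd hss (not_le.mpr hsum_lt)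
end

section
/- Let θ be a stability parameter with θ_i ≤ 0 for all i < q. Then a θ-stable finite graded algebra A (graded in [0,q]) has no non-zero two-sided ideal I with I_q = 0. -/
/-! A θ-stable algebra with θᵢ ≤ 0 for i < q has no nonzero two-sided ideal vanishing in degree q. -/

open Module

variable {A : Type*}

section Aux
variable [Ring A] [Algebra ℂ A] (𝒜 : ℕ → Submodule ℂ A)

lemma Ageq_le_of_mem {i n : ℕ} (h : n ≤ i) : 𝒜 i ≤ Ageq 𝒜 n :=
  le_iSup₂ (f := fun i (_ : i ∈ Set.Ici n) => 𝒜 i) i h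

lemma Ageq_anti {n k : ℕ} (h : n ≤ k) : Ageq 𝒜 k ≤ Ageq 𝒜 n :=
  iSup₂_le fun i hi => Ageq_le_of_mem 𝒜 (le_trans h hi)

lemma Ageq_mul_s13 [SetLike.GradedMonoid 𝒜] (k l : ℕ) :
    Ageq 𝒜 k * Ageq 𝒜 l ≤ Ageq 𝒜 (k + l) := by
  rw [Ageq, Ageq]
  rw [Submodule.iSup_mul]
  refine iSup_le fun i => ?_
  rw [Submodule.iSup_mul]
  refine iSup_le fun hi => ?_
  rw [Submodule.mul_iSup]
  refine iSup_le fun j => ?_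
  rw [Submodule.mul_iSup]
  refine iSup_le fun hj => ?_
  refine le_trans ?_ (Ageq_le_of_mem 𝒜 (add_le_add hi hj))
  exact Submodule.mul_le.2 fun a ha b hb => SetLike.mul_mem_graded ha hb

lemma pow_ideal_left' {J : Submodule ℂ A} (hleft : ∀ a : A, ∀ x ∈ J, a * x ∈ J)
    (k : ℕ) (a : A) : ∀ x ∈ J ^ (k + 1), a * x ∈ J ^ (k + 1) := by
  intro x hx
  rw [pow_succ'] at hx ⊢
  refine Submodule.mul_induction_on hx (fun y hy z hz => ?_) (fun y z hy hz => ?_)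
  · rw [← mul_assoc]
    exact Submodule.mul_mem_mul (hleft a y hy) hz
  · rw [mul_add]; exact Submodule.add_mem _ hy hz

lemma pow_ideal_right' {J : Submodule ℂ A} (hright : ∀ a : A, ∀ x ∈ J, x * a ∈ J)
    (k : ℕ) (a : A) : ∀ x ∈ J ^ (k + 1), x * a ∈ J ^ (k + 1) := by
  intro x hx
  rw [pow_succ] at hx ⊢
  refine Submodule.mul_induction_on hx (fun y hy z hz => ?_) (fun y z hy hz => ?_)
  · rw [mul_assoc]
    exact Submodule.mul_mem_mul hy (hright a z hz)
  · rw [add_mul]; exact Submodule.add_mem _ hy hz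

lemma pow_le_self' {J : Submodule ℂ A} (hleft : ∀ a : A, ∀ x ∈ J, a * x ∈ J)
    (k : ℕ) : J ^ (k + 1) ≤ J := by
  induction k with
  | zero => rw [pow_one]
  | succ n ih =>
    rw [pow_succ]
    exact Submodule.mul_le.2 fun y hy z hz => hleft y z hz

end Aux

set_option maxHeartbeats 1000000 in
/-- if `θ_i ≤ 0` for all `i < q`, then a θ-stable finite graded
algebra `A` (graded in `[0,q]`) has no non-zero two-sided ideal `I` with
`I_q = I ∩ A_q = 0`. -/
theorem theta_stable_no_ideal_vanishing_in_top_degree [Ring A] [Algebra ℂ A]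
    (𝒜 : ℕ → Submodule ℂ A) [GradedAlgebra 𝒜] [∀ i, FiniteDimensional ℂ ↥(𝒜 i)]
    (q : ℕ) (hq : 1 ≤ q) (hbound : ∀ i, q < i → 𝒜 i = ⊥)
    (hconn : 𝒜 0 = Submodule.span ℂ {1})
    (hdpos : ∀ i, 1 ≤ i → i ≤ q → 0 < finrank ℂ ↥(𝒜 i))
    (θ : ℕ → ℤ)
    (hparam1 : ∑ i ∈ Finset.Icc 1 q, θ i * (finrank ℂ ↥(𝒜 i) : ℤ) < 0)
    (hparam2 : ∑ i ∈ Finset.Icc 1 q, (i : ℤ) * θ i * (finrank ℂ ↥(𝒜 i) : ℤ) = 0)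
    (hθ : ∀ i, 1 ≤ i → i < q → θ i ≤ 0)
    (hstable : ThetaStable 𝒜 q θ) :
    ∀ J : Submodule ℂ A,
      (∀ a : A, ∀ x ∈ J, a * x ∈ J) → (∀ a : A, ∀ x ∈ J, x * a ∈ J) →
      J ⊓ 𝒜 q = ⊥ → J = ⊥ := by
  classical
  intro J hleft hright htop
  by_contra hJ
  haveI : Nontrivial (𝒜 q) := finrank_pos_iff.mp (hdpos q hq le_rfl)
  obtain ⟨a, ha0⟩ : ∃ a : 𝒜 q, a ≠ 0 := exists_ne 0
  have haA : (a : A) ≠ 0 := fun h => ha0 (Subtype.ext h)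
  have hAbot : Ageq 𝒜 (q + 1) = ⊥ := by
    refine le_bot_iff.1 ?_
    rw [Ageq]
    exact iSup₂_le fun i hi => by rw [hbound i (by exact hi)]
  have hJle : J ≤ Ageq 𝒜 1 := by
    intro x hx
    have h0mem : (DirectSum.decompose 𝒜 x 0 : A) ∈ Submodule.span ℂ {(1 : A)} := by
      rw [← hconn]; exact (DirectSum.decompose 𝒜 x 0).2
    obtain ⟨c, hc⟩ := Submodule.mem_span_singleton.1 h0mem
    have hy : x - (DirectSum.decompose 𝒜 x 0 : A) ∈ Ageq 𝒜 1 := by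
      have hsum := DirectSum.sum_support_decompose 𝒜 x
      by_cases h0 : 0 ∈ (DirectSum.decompose 𝒜 x).support
      · rw [← Finset.add_sum_erase _ _ h0] at hsum
        have heq : x - (DirectSum.decompose 𝒜 x 0 : A) =
            ∑ i ∈ (DirectSum.decompose 𝒜 x).support.erase 0,
              (DirectSum.decompose 𝒜 x i : A) := by
          exact sub_eq_of_eq_add' hsum.symm
        rw [heq]
        refine Submodule.sum_mem _ fun i hi => ?_
        have hi1 : 1 ≤ i := Nat.one_le_iff_ne_zero.2 (Finset.ne_of_mem_erase hi)
        exact Ageq_le_of_mem 𝒜 hi1 (DirectSum.decompose 𝒜 x i).2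
      · have h00 : (DirectSum.decompose 𝒜 x 0 : A) = 0 := by
          rw [DFinsupp.notMem_support_iff.mp h0]; rfl
        rw [h00, sub_zero, ← hsum]
        refine Submodule.sum_mem _ fun i hi => ?_
        have hi1 : 1 ≤ i := Nat.one_le_iff_ne_zero.2 (by rintro rfl; exact h0 hi)
        exact Ageq_le_of_mem 𝒜 hi1 (DirectSum.decompose 𝒜 x i).2
    rw [← hc] at hy
    have hya : (x - c • 1) * (a : A) = 0 := by
      have hmem : (x - c • 1) * (a : A) ∈ Ageq 𝒜 (1 + q) :=
        Ageq_mul_s13 𝒜 1 q (Submodule.mul_mem_mul hy (Ageq_le_of_mem 𝒜 le_rfl a.2))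
      rw [add_comm, hAbot] at hmem
      exact hmem
    have hxa : x * (a : A) = c • (a : A) := by
      have h1 : (x - c • 1) * (a : A) = x * a - c • (a : A) := by
        rw [sub_mul, smul_mul_assoc, one_mul]
      rw [h1] at hya
      exact sub_eq_zero.mp hya
    have hmem : c • (a : A) ∈ J ⊓ 𝒜 q :=
      ⟨hxa ▸ hright (a : A) x hx, (𝒜 q).smul_mem c a.2⟩
    rw [htop, Submodule.mem_bot] at hmem
    have hc0 : c = 0 := by
      rcases smul_eq_zero.mp hmem with h | h
      · exact h
      · exact absurd h haA
    have hxy : x = x - c • 1 := by rw [hc0, zero_smul, sub_zero]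
    rw [hxy]; exact hy
  -- powers of J sit inside Ageq 𝒜 k
  have hpowAgeq : ∀ k : ℕ, J ^ (k + 1) ≤ Ageq 𝒜 (k + 1) := by
    intro k
    induction k with
    | zero => rw [pow_one]; exact hJle
    | succ n ih =>
      rw [pow_succ]
      exact le_trans (mul_le_mul' ih hJle) (Ageq_mul_s13 𝒜 (n + 1) 1)
  have hpowbot : ∀ k : ℕ, q + 1 ≤ k → J ^ k = ⊥ := by
    intro k hk
    obtain ⟨m, rfl⟩ : ∃ m, k = m + 1 := ⟨k - 1, by omega⟩
    refine le_bot_iff.1 ?_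
    refine le_trans (hpowAgeq m) ?_
    rw [← hAbot]
    exact Ageq_anti 𝒜 (by omega)
  have hpowJ : ∀ k : ℕ, 1 ≤ k → J ^ k ≤ J := by
    intro k hk
    obtain ⟨m, rfl⟩ : ∃ m, k = m + 1 := ⟨k - 1, by omega⟩
    exact pow_le_self' hleft m
  set I : ℕ → Submodule ℂ A := fun k => J ^ k with hI
  have hadm : AdmissibleFamily 𝒜 I := by
    constructor
    · intro k hk b x hx
      obtain ⟨m, rfl⟩ : ∃ m, k = m + 1 := ⟨k - 1, by omega⟩
      exact pow_ideal_left' hleft m b x hx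
    · intro k hk b x hx
      obtain ⟨m, rfl⟩ : ∃ m, k = m + 1 := ⟨k - 1, by omega⟩
      exact pow_ideal_right' hright m b x hx
    · intro k hk
      show J ^ (k + 1) ≤ J ^ k
      rw [pow_succ]
      refine Submodule.mul_le.2 fun y hy z hz => ?_
      obtain ⟨m, rfl⟩ : ∃ m, k = m + 1 := ⟨k - 1, by omega⟩
      exact pow_ideal_right' hright m z y hy
    · intro k l hk hl x hx y hy
      show x * y ∈ J ^ (k + l)
      rw [pow_add]
      exact Submodule.mul_mem_mul hx hy
    · intro i
      exact ⟨q + 1, fun k hk => by show J ^ k ⊓ 𝒜 i = ⊥; rw [hpowbot k hk, bot_inf_eq]⟩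
  have hne : I 1 ≠ ⊥ := by
    show J ^ 1 ≠ ⊥
    rw [pow_one]; exact hJ
  have hndom : ¬ Dominates 𝒜 I := by
    intro hd
    have h1 : 𝒜 q ≤ J := le_trans (le_trans (Ageq_le_of_mem 𝒜 le_rfl) (hd q hq)) (hpowJ q hq)
    have h2 : (a : A) ∈ J ⊓ 𝒜 q := ⟨h1 a.2, a.2⟩
    rw [htop, Submodule.mem_bot] at h2
    exact haA h2
  have hL : ∀ k, q + 1 ≤ k → ∀ i, I k ⊓ 𝒜 i = ⊥ := by
    intro k hk i
    show J ^ k ⊓ 𝒜 i = ⊥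
    rw [hpowbot k hk, bot_inf_eq]
  have hpos := hstable I hadm hne hndom (q + 1) hL
  have hnonpos : ∑ i ∈ Finset.Icc 1 q, θ i * (weight 𝒜 I (q + 1) i : ℤ) ≤ 0 := by
    refine Finset.sum_nonpos fun i hi => ?_
    obtain ⟨hi1, hi2⟩ := Finset.mem_Icc.mp hi
    rcases eq_or_lt_of_le hi2 with rfl | hilt
    · have hw : weight 𝒜 I (i + 1) i = 0 := by
        rw [weight]
        refine Finset.sum_eq_zero fun k hk => ?_
        have hk1 : 1 ≤ k := (Finset.mem_Icc.mp hk).1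
        have : I k ⊓ 𝒜 i = ⊥ := by
          refine le_bot_iff.1 ?_
          rw [← htop]
          exact inf_le_inf_right _ (hpowJ k hk1)
        rw [this]
        exact finrank_bot ℂ A
      rw [hw]
      simp
    · have h1 : θ i ≤ 0 := hθ i hi1 hilt
      have h2 : (0 : ℤ) ≤ (weight 𝒜 I (q + 1) i : ℤ) := Int.natCast_nonneg _
      exact mul_nonpos_iff.2 (Or.inr ⟨h1, h2⟩)
  omega
end
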